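/- Assume β > β₀. Then the Jacobian determinant of (α₁, α₂) at (k₀, l₀), namely F(k₀,l₀) = ∂ₖα₁(k₀,l₀)·∂ₗα₂(k₀,l₀) − ∂ₗα₁(k₀,l₀)·∂ₖα₂(k₀,l₀) (where ∂ₖα₁(k₀,l₀) is the derivative of k ↦ α₁(k,l₀) at k₀, etc.), satisfies F(k₀,l₀) = (p/2)(p-1) k₀⁻¹ l₀⁻¹ (μ₁ k₀^{p-1} + μ₂ l₀^{p-1} − 2/p), and F(k₀,l₀) < 0. -/

import Mathlib

open Real

private lemma bracket_id (p a b c d : ℝ) (h1 : a + b = 1) (h2 : c + d = 1) :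
    ((p-1)*a + (p/2-1)*b) * ((p-1)*c + (p/2-1)*d) - (p/2*b)*(p/2*d)
      = p/2*(p-1)*(a+c) - (p-1) := by
  have hb : b = 1 - a := by linarith
  have hd : d = 1 - c := by linarith
  subst hb hd; ring

private lemma sum_lt (u m b2 A B C D : ℝ) (hu1 : 1 < u) (hu2 : u < 2)
    (hm : 0 < m) (hb2 : 0 < b2)
    (hA : 0 < A) (hB : 0 < B) (hC : 0 < C) (hD : 0 < D)
    (h1 : A + B = 1) (h2 : C + D = 1)
    (hprod : m * (B * D) = b2 * (A * C))
    (hgt : (2 - u)^2 * m < u^2 * b2) :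
    A + C < u := by
  by_contra hcon
  push_neg at hcon
  -- structural identity
  have hs1 : (m - b2) * (A * C) = m * (A + C - 1) := by
    have hb : B = 1 - A := by linarith
    have hd : D = 1 - C := by linarith
    rw [hb, hd] at hprod
    linear_combination hprod
  have hs0 : m * (u - 1) ≤ m * (A + C - 1) :=
    mul_le_mul_of_nonneg_left (by linarith) hm.le
  have hmq : 0 < m * (u - 1) := mul_pos hm (by linarith)
  have hs2 : 0 < m - b2 := by
    by_contra hle
    push_neg at hle
    have hnp : (m - b2) * (A * C) ≤ 0 :=
      mul_nonpos_iff.mpr (Or.inr ⟨by linarith, (mul_pos hA hC).le⟩)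
    linarith
  have hs3 : m * (u - 1) ≤ (m - b2) * (A * C) := by linarith
  have h4 : 4 * (B * D) ≤ (B + D)^2 := by nlinarith [sq_nonneg (B - D)]
  have h6 : B + D ≤ 2 - u := by linarith
  have h7 : 0 ≤ B + D := by linarith
  have h8 : (B + D)^2 ≤ (2 - u)^2 := pow_le_pow_left₀ h7 h6 2
  have h9 : 4 * (B * D) ≤ (2 - u)^2 := le_trans h4 h8
  have h10 : m * (4 * (B * D)) ≤ m * ((2 - u)^2) :=
    mul_le_mul_of_nonneg_left h9 hm.le
  have h11 : 4 * (b2 * (A * C)) ≤ m * ((2 - u)^2) := by linarith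
  have h13 : (4 * b2) * (m * (u - 1)) ≤ (4 * b2) * ((m - b2) * (A * C)) :=
    mul_le_mul_of_nonneg_left hs3 (by positivity)
  have h14 : (m - b2) * (4 * (b2 * (A * C))) ≤ (m - b2) * (m * ((2 - u)^2)) :=
    mul_le_mul_of_nonneg_left h11 hs2.le
  have hfin : m * (4 * b2 * (u - 1)) ≤ m * ((m - b2) * ((2 - u)^2)) := by linarith
  have h15 : 4 * b2 * (u - 1) ≤ (m - b2) * ((2 - u)^2) :=
    (mul_le_mul_iff_right₀ hm).mp hfin
  -- 4(u-1) + (2-u)^2 = u^2, so (2-u)^2 * m ≥ u^2 * b2, contradiction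
  nlinarith [h15, hgt, mul_pos hb2 (mul_pos hm hm)]

set_option maxHeartbeats 1000000 in
theorem stmt_8 (N : ℕ) (hN : 5 ≤ N) (p : ℝ) (hp : p = (N : ℝ) / ((N : ℝ) - 2))
    (μ₁ μ₂ β : ℝ) (hμ₁ : 0 < μ₁) (hμ₂ : 0 < μ₂) (hβ : 0 < β)
    (β₀ : ℝ) (hβ₀ge : (p - 1) * max μ₁ μ₂ ≤ β₀)
    (hβ₀eq : (p - 1) * μ₁ * μ₂ * β₀ ^ (2 / p - 2) + β₀ ^ (2 / p) =
      p * (p - 1) ^ (2 / p - 1) * max (μ₁ ^ (2 / p)) (μ₂ ^ (2 / p)))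
    (hββ₀ : β₀ < β)
    (k₀ l₀ : ℝ) (hk₀ : 0 < k₀) (hl₀ : 0 < l₀)
    (he₁ : μ₁ * k₀ ^ (p - 1) + β * k₀ ^ (p / 2 - 1) * l₀ ^ (p / 2) = 1)
    (he₂ : μ₂ * l₀ ^ (p - 1) + β * l₀ ^ (p / 2 - 1) * k₀ ^ (p / 2) = 1)
    (hmin : ∀ k l : ℝ, 0 < k → 0 < l →
      μ₁ * k ^ (p - 1) + β * k ^ (p / 2 - 1) * l ^ (p / 2) = 1 →
      μ₂ * l ^ (p - 1) + β * l ^ (p / 2 - 1) * k ^ (p / 2) = 1 →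
      k₀ ≤ k) :
    (deriv (fun k : ℝ => μ₁ * k ^ (p - 1) + β * k ^ (p / 2 - 1) * l₀ ^ (p / 2) - 1) k₀ *
        deriv (fun l : ℝ => μ₂ * l ^ (p - 1) + β * l ^ (p / 2 - 1) * k₀ ^ (p / 2) - 1) l₀ -
      deriv (fun l : ℝ => μ₁ * k₀ ^ (p - 1) + β * k₀ ^ (p / 2 - 1) * l ^ (p / 2) - 1) l₀ *
        deriv (fun k : ℝ => μ₂ * l₀ ^ (p - 1) + β * l₀ ^ (p / 2 - 1) * k ^ (p / 2) - 1) k₀)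
      = p / 2 * (p - 1) * k₀⁻¹ * l₀⁻¹ * (μ₁ * k₀ ^ (p - 1) + μ₂ * l₀ ^ (p - 1) - 2 / p) ∧
    (deriv (fun k : ℝ => μ₁ * k ^ (p - 1) + β * k ^ (p / 2 - 1) * l₀ ^ (p / 2) - 1) k₀ *
        deriv (fun l : ℝ => μ₂ * l ^ (p - 1) + β * l ^ (p / 2 - 1) * k₀ ^ (p / 2) - 1) l₀ -
      deriv (fun l : ℝ => μ₁ * k₀ ^ (p - 1) + β * k₀ ^ (p / 2 - 1) * l ^ (p / 2) - 1) l₀ *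
        deriv (fun k : ℝ => μ₂ * l₀ ^ (p - 1) + β * l₀ ^ (p / 2 - 1) * k ^ (p / 2) - 1) k₀)
      < 0 := by
  have hN5 : (5:ℝ) ≤ (N:ℝ) := by exact_mod_cast hN
  have hN2 : (0:ℝ) < (N:ℝ) - 2 := by linarith
  have hp1 : 1 < p := by rw [hp, lt_div_iff₀ hN2]; linarith
  have hp2 : p < 2 := by rw [hp, div_lt_iff₀ hN2]; linarith
  have hp0 : 0 < p := by linarith
  -- derivative computations
  have d1 : deriv (fun k : ℝ => μ₁ * k ^ (p-1) + β * k ^ (p/2-1) * l₀ ^ (p/2) - 1) k₀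
      = μ₁ * ((p-1) * k₀ ^ (p-1-1)) + β * ((p/2-1) * k₀ ^ (p/2-1-1)) * l₀ ^ (p/2) :=
    ((((Real.hasDerivAt_rpow_const (p := p-1) (Or.inl hk₀.ne')).const_mul μ₁).add
      (((Real.hasDerivAt_rpow_const (p := p/2-1) (Or.inl hk₀.ne')).const_mul β).mul_const
        (l₀ ^ (p/2)))).sub_const 1).deriv
  have d2 : deriv (fun l : ℝ => μ₂ * l ^ (p-1) + β * l ^ (p/2-1) * k₀ ^ (p/2) - 1) l₀
      = μ₂ * ((p-1) * l₀ ^ (p-1-1)) + β * ((p/2-1) * l₀ ^ (p/2-1-1)) * k₀ ^ (p/2) :=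
    ((((Real.hasDerivAt_rpow_const (p := p-1) (Or.inl hl₀.ne')).const_mul μ₂).add
      (((Real.hasDerivAt_rpow_const (p := p/2-1) (Or.inl hl₀.ne')).const_mul β).mul_const
        (k₀ ^ (p/2)))).sub_const 1).deriv
  have d3 : deriv (fun l : ℝ => μ₁ * k₀ ^ (p-1) + β * k₀ ^ (p/2-1) * l ^ (p/2) - 1) l₀
      = β * k₀ ^ (p/2-1) * ((p/2) * l₀ ^ (p/2-1)) :=
    ((((Real.hasDerivAt_rpow_const (p := p/2) (Or.inl hl₀.ne')).const_mul
      (β * k₀ ^ (p/2-1))).const_add (μ₁ * k₀ ^ (p-1))).sub_const 1).deriv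
  have d4 : deriv (fun k : ℝ => μ₂ * l₀ ^ (p-1) + β * l₀ ^ (p/2-1) * k ^ (p/2) - 1) k₀
      = β * l₀ ^ (p/2-1) * ((p/2) * k₀ ^ (p/2-1)) :=
    ((((Real.hasDerivAt_rpow_const (p := p/2) (Or.inl hk₀.ne')).const_mul
      (β * l₀ ^ (p/2-1))).const_add (μ₂ * l₀ ^ (p-1))).sub_const 1).deriv
  -- rpow exponent relations
  have rk1 : k₀ ^ (p-1-1) = k₀ ^ (p-1) / k₀ := by
    rw [Real.rpow_sub hk₀, Real.rpow_one]
  have rk2 : k₀ ^ (p/2-1-1) = k₀ ^ (p/2-1) / k₀ := by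
    rw [Real.rpow_sub hk₀, Real.rpow_one]
  have rl1 : l₀ ^ (p-1-1) = l₀ ^ (p-1) / l₀ := by
    rw [Real.rpow_sub hl₀, Real.rpow_one]
  have rl2 : l₀ ^ (p/2-1-1) = l₀ ^ (p/2-1) / l₀ := by
    rw [Real.rpow_sub hl₀, Real.rpow_one]
  have hK3 : k₀ ^ (p/2) = k₀ ^ (p/2-1) * k₀ := by
    rw [← Real.rpow_add_one hk₀.ne', show p/2-1+1 = p/2 by ring]
  have hL3 : l₀ ^ (p/2) = l₀ ^ (p/2-1) * l₀ := by
    rw [← Real.rpow_add_one hl₀.ne', show p/2-1+1 = p/2 by ring]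
  -- abbreviations
  set A := μ₁ * k₀ ^ (p-1) with hA_def
  set C := μ₂ * l₀ ^ (p-1) with hC_def
  set B := β * k₀ ^ (p/2-1) * l₀ ^ (p/2) with hB_def
  set D := β * l₀ ^ (p/2-1) * k₀ ^ (p/2) with hD_def
  have hA : 0 < A := mul_pos hμ₁ (Real.rpow_pos_of_pos hk₀ _)
  have hC : 0 < C := mul_pos hμ₂ (Real.rpow_pos_of_pos hl₀ _)
  have hB : 0 < B := mul_pos (mul_pos hβ (Real.rpow_pos_of_pos hk₀ _)) (Real.rpow_pos_of_pos hl₀ _)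
  have hD : 0 < D := mul_pos (mul_pos hβ (Real.rpow_pos_of_pos hl₀ _)) (Real.rpow_pos_of_pos hk₀ _)
  -- product relation
  have hkk : k₀ ^ (p/2-1) * k₀ ^ (p/2) = k₀ ^ (p-1) := by
    rw [← Real.rpow_add hk₀, show p/2-1+p/2 = p-1 by ring]
  have hll : l₀ ^ (p/2-1) * l₀ ^ (p/2) = l₀ ^ (p-1) := by
    rw [← Real.rpow_add hl₀, show p/2-1+p/2 = p-1 by ring]
  have hprod : μ₁ * μ₂ * (B * D) = β^2 * (A * C) := by
    rw [hB_def, hD_def, hA_def, hC_def, ← hkk, ← hll]; ring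
  -- the Jacobian identity
  rw [d1, d2, d3, d4, rk1, rk2, rl1, rl2]
  have hmain :
      (μ₁ * ((p-1) * (k₀ ^ (p-1) / k₀)) + β * ((p/2-1) * (k₀ ^ (p/2-1) / k₀)) * l₀ ^ (p/2)) *
        (μ₂ * ((p-1) * (l₀ ^ (p-1) / l₀)) + β * ((p/2-1) * (l₀ ^ (p/2-1) / l₀)) * k₀ ^ (p/2)) -
      β * k₀ ^ (p/2-1) * (p/2 * l₀ ^ (p/2-1)) * (β * l₀ ^ (p/2-1) * (p/2 * k₀ ^ (p/2-1)))
      = p/2 * (p-1) * k₀⁻¹ * l₀⁻¹ * (A + C - 2/p) := by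
    have hbr := bracket_id p A B C D he₁ he₂
    have step1 :
        (μ₁ * ((p-1) * (k₀ ^ (p-1) / k₀)) + β * ((p/2-1) * (k₀ ^ (p/2-1) / k₀)) * l₀ ^ (p/2)) *
          (μ₂ * ((p-1) * (l₀ ^ (p-1) / l₀)) + β * ((p/2-1) * (l₀ ^ (p/2-1) / l₀)) * k₀ ^ (p/2)) -
        β * k₀ ^ (p/2-1) * (p/2 * l₀ ^ (p/2-1)) * (β * l₀ ^ (p/2-1) * (p/2 * k₀ ^ (p/2-1)))
        = (((p-1)*A + (p/2-1)*B) * ((p-1)*C + (p/2-1)*D) - (p/2*B)*(p/2*D)) * (k₀⁻¹ * l₀⁻¹) := by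
      rw [hA_def, hC_def, hB_def, hD_def, hK3, hL3]
      field_simp
    rw [step1, hbr]
    field_simp
  refine ⟨hmain, ?_⟩
  rw [hmain]
  -- negativity
  set u := 2/p with hu_def
  have hu1 : 1 < u := (one_lt_div hp0).mpr hp2
  have hu2 : u < 2 := by rw [hu_def, div_lt_iff₀ hp0]; linarith
  have hup : u * (p - 1) = 2 - u := by rw [hu_def]; field_simp
  -- β² > (p-1)² μ₁ μ₂
  have hM1 : μ₁ ≤ max μ₁ μ₂ := le_max_left _ _
  have hM2 : μ₂ ≤ max μ₁ μ₂ := le_max_right _ _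
  have hM0 : 0 < max μ₁ μ₂ := lt_of_lt_of_le hμ₁ hM1
  have hβgt : (p-1) * max μ₁ μ₂ < β := lt_of_le_of_lt hβ₀ge hββ₀
  have hMM : μ₁ * μ₂ ≤ (max μ₁ μ₂) * (max μ₁ μ₂) := mul_le_mul hM1 hM2 hμ₂.le hM0.le
  have hsq : ((p-1) * max μ₁ μ₂)^2 < β^2 :=
    pow_lt_pow_left₀ hβgt (mul_nonneg (by linarith only [hp1]) hM0.le) (by norm_num)
  have hβ2 : (p-1)^2 * (μ₁ * μ₂) < β^2 := by
    have h' : (p-1)^2 * (μ₁ * μ₂) ≤ (p-1)^2 * ((max μ₁ μ₂) * (max μ₁ μ₂)) :=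
      mul_le_mul_of_nonneg_left hMM (sq_nonneg _)
    have heq : (p-1)^2 * ((max μ₁ μ₂) * (max μ₁ μ₂)) = ((p-1) * max μ₁ μ₂)^2 := by ring
    linarith only [h', hsq, heq]
  have hgt : (2 - u)^2 * (μ₁ * μ₂) < u^2 * β^2 := by
    have h' : u^2 * ((p-1)^2 * (μ₁ * μ₂)) < u^2 * β^2 :=
      mul_lt_mul_of_pos_left hβ2 (by positivity)
    have heq : u^2 * ((p-1)^2 * (μ₁ * μ₂)) = (2 - u)^2 * (μ₁ * μ₂) := by
      rw [← hup]; ring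
    linarith only [h', heq]
  have hACsum : A + C < u :=
    sum_lt u (μ₁ * μ₂) (β^2) A B C D hu1 hu2 (mul_pos hμ₁ hμ₂) (by positivity)
      hA hB hC hD he₁ he₂ hprod hgt
  have hpref : 0 < p/2 * (p-1) * k₀⁻¹ * l₀⁻¹ :=
    mul_pos (mul_pos (mul_pos (by linarith only [hp0] : (0:ℝ) < p/2)
      (by linarith only [hp1] : (0:ℝ) < p-1)) (inv_pos.mpr hk₀)) (inv_pos.mpr hl₀)
  exact mul_neg_of_pos_of_neg hpref (by linarith only [hACsum])
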